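/- Let R be a ring with finitely generated additive group and R* an ultrapower of R over an ultrafilter D. Then Is((R*)²) = (Is(R²))*, where Is(I) denotes the set of elements x with nx ∈ I for some nonzero integer n. -/

import Mathlib

/-- The ideal (additive subgroup) generated by all products in `R`. -/
def sqIdeal (R : Type*) [NonUnitalNonAssocRing R] : AddSubgroup R :=
  AddSubgroup.closure {z : R | ∃ x y : R, z = x * y}

/-- The two-sided annihilator of `R` as an additive subgroup. -/
def ann (R : Type*) [NonUnitalNonAssocRing R] : AddSubgroup R where
  carrier := {x : R | ∀ y : R, x * y = 0 ∧ y * x = 0}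
  zero_mem' := fun y => ⟨zero_mul y, mul_zero y⟩
  add_mem' := by
    intro a b ha hb y
    exact ⟨by rw [add_mul, (ha y).1, (hb y).1, add_zero],
      by rw [mul_add, (ha y).2, (hb y).2, add_zero]⟩
  neg_mem' := by
    intro a ha y
    exact ⟨by rw [neg_mul, (ha y).1, neg_zero], by rw [mul_neg, (ha y).2, neg_zero]⟩

/-- The isolator `Is(I) = {x : ∃ n ≠ 0, n • x ∈ I}` of an additive subgroup. -/
def isolator {R : Type*} [AddCommGroup R] (I : AddSubgroup R) : AddSubgroup R where
  carrier := {x : R | ∃ n : ℤ, n ≠ 0 ∧ n • x ∈ I}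
  zero_mem' := ⟨1, one_ne_zero, by simpa using I.zero_mem⟩
  add_mem' := by
    rintro a b ⟨n, hn, ha⟩ ⟨m, hm, hb⟩
    refine ⟨n * m, mul_ne_zero hn hm, ?_⟩
    rw [smul_add]
    exact AddSubgroup.add_mem _
      (by rw [mul_comm, mul_smul]; exact AddSubgroup.zsmul_mem _ ha m)
      (by rw [mul_smul]; exact AddSubgroup.zsmul_mem _ hb n)
  neg_mem' := by
    rintro a ⟨n, hn, ha⟩
    exact ⟨n, hn, by rw [smul_neg]; exact AddSubgroup.neg_mem _ ha⟩

open Filter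

private theorem germ_coe_sum {α M : Type*} (l : Filter α) [AddCommMonoid M] {β : Type*}
    (s : Finset β) (F : β → α → M) :
    (↑(fun i => ∑ b ∈ s, F b i) : Germ l M) = ∑ b ∈ s, (↑(F b) : Germ l M) := by
  classical
  induction s using Finset.induction with
  | empty => simp only [Finset.sum_empty, ← Germ.coe_zero]; rfl
  | insert _ _ h ih =>
    rw [Finset.sum_insert h, ← ih, ← Germ.coe_add]
    apply congrArg
    funext i
    simp [Finset.sum_insert h]

section Aux

variable {R : Type*} [NonUnitalNonAssocRing R]

/-- The "internal" additive subgroup of the ultrapower determined by `J`. -/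
def internalSG {ι : Type*} (U : Ultrafilter ι) (J : AddSubgroup R) :
    AddSubgroup (Germ (U : Filter ι) R) where
  carrier := {g | g.LiftPred (· ∈ J)}
  zero_mem' := by
    rw [Set.mem_setOf_eq, ← Germ.coe_zero]
    exact Germ.liftPred_coe.mpr (Eventually.of_forall fun _ => J.zero_mem)
  add_mem' := by
    intro a b ha hb
    induction a using Germ.inductionOn with | h f => ?_
    induction b using Germ.inductionOn with | h g => ?_
    rw [Set.mem_setOf_eq] at *
    rw [← Germ.coe_add]
    rw [Germ.liftPred_coe] at *
    exact (ha.and hb).mono fun i hi => J.add_mem hi.1 hi.2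
  neg_mem' := by
    intro a ha
    induction a using Germ.inductionOn with | h f => ?_
    rw [Set.mem_setOf_eq] at *
    rw [← Germ.coe_neg]
    rw [Germ.liftPred_coe] at *
    exact ha.mono fun i hi => J.neg_mem hi

/-- `sqIdeal R` is the closure of a finite set of products. -/
theorem sqIdeal_fin (hR : AddGroup.FG R) :
    ∃ V : Finset R, (↑V : Set R) ⊆ {z : R | ∃ x y : R, z = x * y} ∧
      AddSubgroup.closure (V : Set R) = sqIdeal R := by
  classical
  obtain ⟨S, hS⟩ := AddGroup.fg_def.mp hR
  refine ⟨Finset.image₂ (· * ·) S S, ?_, ?_⟩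
  · intro z hz
    obtain ⟨x, _, y, _, rfl⟩ := Finset.mem_image₂.mp (by exact_mod_cast hz)
    exact ⟨x, y, rfl⟩
  · set V : Finset R := Finset.image₂ (· * ·) S S with hV
    have key : ∀ x y : R, x * y ∈ AddSubgroup.closure (V : Set R) := by
      have h1 : ∀ a ∈ S, ∀ y : R, a * y ∈ AddSubgroup.closure (V : Set R) := by
        intro a ha
        let K : AddSubgroup R :=
          { carrier := {y | a * y ∈ AddSubgroup.closure (V : Set R)}
            zero_mem' := by simp [AddSubgroup.zero_mem]
            add_mem' := by
              intro y z hy hz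
              simp only [Set.mem_setOf_eq, mul_add] at *
              exact AddSubgroup.add_mem _ hy hz
            neg_mem' := by
              intro y hy
              simp only [Set.mem_setOf_eq, mul_neg] at *
              exact AddSubgroup.neg_mem _ hy }
        have hK : AddSubgroup.closure (S : Set R) ≤ K := by
          apply (AddSubgroup.closure_le _).mpr
          intro s hs
          exact AddSubgroup.subset_closure (Finset.mem_image₂.mpr ⟨a, ha, s, hs, rfl⟩)
        rw [hS] at hK
        intro y
        exact hK (AddSubgroup.mem_top y)
      intro x y
      let K : AddSubgroup R :=
        { carrier := {x | x * y ∈ AddSubgroup.closure (V : Set R)}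
          zero_mem' := by simp [AddSubgroup.zero_mem]
          add_mem' := by
            intro u v hu hv
            simp only [Set.mem_setOf_eq, add_mul] at *
            exact AddSubgroup.add_mem _ hu hv
          neg_mem' := by
            intro u hu
            simp only [Set.mem_setOf_eq, neg_mul] at *
            exact AddSubgroup.neg_mem _ hu }
      have hK : AddSubgroup.closure (S : Set R) ≤ K := by
        apply (AddSubgroup.closure_le _).mpr
        intro s hs
        exact h1 s hs y
      rw [hS] at hK
      exact hK (AddSubgroup.mem_top x)
    apply le_antisymm
    · apply (AddSubgroup.closure_le _).mpr
      intro z hz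
      obtain ⟨x, _, y, _, rfl⟩ := Finset.mem_image₂.mp (by exact_mod_cast hz)
      exact AddSubgroup.subset_closure ⟨x, y, rfl⟩
    · apply (AddSubgroup.closure_le _).mpr
      rintro z ⟨x, y, rfl⟩
      exact key x y

/-- There is a single nonzero exponent `m` with `m • Is(R²) ⊆ R²`. -/
theorem exists_exponent (hR : AddGroup.FG R) :
    ∃ m : ℤ, m ≠ 0 ∧ ∀ x ∈ isolator (sqIdeal R), m • x ∈ sqIdeal R := by
  classical
  have hfin : Module.Finite ℤ R := Module.Finite.iff_addGroup_fg.mpr hR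
  have hnoeth : IsNoetherian ℤ R := isNoetherian_of_isNoetherianRing_of_finite ℤ R
  obtain ⟨T, hT⟩ := IsNoetherian.noetherian (AddSubgroup.toIntSubmodule (isolator (sqIdeal R)))
  have hTmem : ∀ t ∈ T, ∃ n : ℤ, n ≠ 0 ∧ n • t ∈ sqIdeal R := by
    intro t ht
    have : t ∈ Submodule.span ℤ (T : Set R) := Submodule.subset_span ht
    rw [hT] at this
    exact this
  choose! n hn hns using hTmem
  refine ⟨∏ t ∈ T, n t, Finset.prod_ne_zero_iff.mpr hn, ?_⟩
  intro x hx
  have hx' : x ∈ Submodule.span ℤ (T : Set R) := by rw [hT]; exact hx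
  obtain ⟨c, -, hc⟩ := Submodule.mem_span_finset.mp hx'
  rw [← hc, Finset.smul_sum]
  apply AddSubgroup.sum_mem
  intro t ht
  rw [smul_comm]
  apply AddSubgroup.zsmul_mem
  rw [← Finset.prod_erase_mul T n ht, mul_smul]
  exact AddSubgroup.zsmul_mem _ (hns t ht) _

/-- Every internal element of the square ideal is in the square ideal of the ultrapower. -/
theorem internal_le_sqIdeal (hR : AddGroup.FG R) {ι : Type*} (U : Ultrafilter ι) :
    internalSG U (sqIdeal R) ≤ sqIdeal (Germ (U : Filter ι) R) := by
  classical
  obtain ⟨V, hVprod, hVcl⟩ := sqIdeal_fin hR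
  intro g hg
  induction g using Germ.inductionOn with | h f => ?_
  have hf : ∀ᶠ i in (U : Filter ι), f i ∈ sqIdeal R := Germ.liftPred_coe.mp hg
  have hspan : ∀ x : R, x ∈ sqIdeal R ↔ x ∈ Submodule.span ℤ (V : Set R) := by
    intro x
    rw [← hVcl, ← Submodule.span_int_eq_addSubgroupClosure, Submodule.mem_toAddSubgroup]
  have hf' : ∀ᶠ i in (U : Filter ι), f i ∈ Submodule.span ℤ (V : Set R) :=
    hf.mono fun i hi => (hspan _).mp hi
  set c : ι → R → ℤ := fun i =>
    if h : f i ∈ Submodule.span ℤ (V : Set R) then (Submodule.mem_span_finset.mp h).choose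
    else 0 with hcdef
  have hc : ∀ᶠ i in (U : Filter ι), ∑ v ∈ V, c i v • v = f i := by
    refine hf'.mono fun i hi => ?_
    simp only [hcdef, dif_pos hi]
    exact (Submodule.mem_span_finset.mp hi).choose_spec.2
  have hsum : (↑f : Germ (U : Filter ι) R) =
      ∑ v ∈ V, (↑(fun i => c i v • v) : Germ (U : Filter ι) R) := by
    rw [← germ_coe_sum (U : Filter ι) V (fun v i => c i v • v)]
    exact Germ.coe_eq.mpr (hc.mono fun i hi => hi.symm)
  rw [hsum]
  apply AddSubgroup.sum_mem
  intro v hv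
  obtain ⟨x, y, hxy⟩ := hVprod hv
  refine AddSubgroup.subset_closure
    ⟨(↑(fun i => c i v • x) : Germ (U : Filter ι) R), (↑(fun _ : ι => y) : Germ (U : Filter ι) R),
      ?_⟩
  rw [← Germ.coe_mul]
  apply Germ.coe_eq.mpr
  apply Eventually.of_forall
  intro i
  show c i v • v = (c i v • x) * y
  rw [smul_mul_assoc, ← hxy]

/-- The square ideal of the ultrapower is contained in the internal square ideal. -/
theorem sqIdeal_le_internal {ι : Type*} (U : Ultrafilter ι) :
    sqIdeal (Germ (U : Filter ι) R) ≤ internalSG U (sqIdeal R) := by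
  apply (AddSubgroup.closure_le _).mpr
  rintro z ⟨a, b, rfl⟩
  induction a using Germ.inductionOn with | h f => ?_
  induction b using Germ.inductionOn with | h g => ?_
  show ((↑f : Germ (U : Filter ι) R) * ↑g) ∈ {g : Germ (U : Filter ι) R | _}
  rw [← Germ.coe_mul]
  exact Germ.liftPred_coe.mpr
    (Eventually.of_forall fun i => AddSubgroup.subset_closure ⟨f i, g i, rfl⟩)

end Aux

/-- for a ring with finitely generated additive group and any ultrapower
`R*`, `Is((R*)²) = (Is(R²))*`. -/
theorem isolator_sq_ultrapower (R : Type*) [NonUnitalNonAssocRing R]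
    (hR : AddGroup.FG R) {ι : Type*} (U : Ultrafilter ι) :
    (isolator (sqIdeal (Germ (U : Filter ι) R)) : Set (Germ (U : Filter ι) R)) =
      {g : Germ (U : Filter ι) R | g.LiftPred (· ∈ isolator (sqIdeal R))} := by
  ext g
  induction g using Germ.inductionOn with | h f => ?_
  simp only [Set.mem_setOf_eq, SetLike.mem_coe]
  constructor
  · rintro ⟨n, hn, hng⟩
    have h1 : (n • (↑f : Germ (U : Filter ι) R)) ∈ internalSG U (sqIdeal R) :=
      sqIdeal_le_internal U hng
    rw [← Germ.coe_smul] at h1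
    have h2 : ∀ᶠ i in (U : Filter ι), n • f i ∈ sqIdeal R := Germ.liftPred_coe.mp h1
    exact Germ.liftPred_coe.mpr (h2.mono fun i hi => ⟨n, hn, hi⟩)
  · intro hg
    obtain ⟨m, hm, hmx⟩ := exists_exponent hR
    refine ⟨m, hm, ?_⟩
    apply internal_le_sqIdeal hR U
    have hg' : ∀ᶠ i in (U : Filter ι), f i ∈ isolator (sqIdeal R) := Germ.liftPred_coe.mp hg
    show (m • (↑f : Germ (U : Filter ι) R)) ∈ {g : Germ (U : Filter ι) R | _}
    rw [← Germ.coe_smul]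
    exact Germ.liftPred_coe.mpr (hg'.mono fun i hi => hmx _ hi)
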